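/- With notation as in the context, the pair (L₁ ⊗_{A₀} L₂, B₁ ⊗ B₂) is a crystal base of the B-module V₁ ⊗ V₂, and the crystal operators on B₁ ⊗ B₂ are given by the tensor rule: if a + b > 0, then ẽ(b₁ ⊗ b₂) = (ẽb₁) ⊗ b₂ and f̃(b₁ ⊗ b₂) = (f̃b₁) ⊗ b₂; if a = b = 0, then ẽ(b₁ ⊗ b₂) = b₁ ⊗ (ẽb₂) and f̃(b₁ ⊗ b₂) = b₁ ⊗ (f̃b₂). -/

import Mathlib

noncomputable section

open scoped TensorProduct

/-- `𝕜 = ℚ(q)`, the field of rational functions in `q` over `ℚ`. -/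
abbrev KK : Type := RatFunc ℚ

/-- the variable `q`. -/
def qq : KK := RatFunc.X

/-- `A₀ ⊂ 𝕜`: the subring of rational functions regular at `q = 0`. -/
def A0 : Subring KK where
  carrier := {f | ∃ p r : Polynomial ℚ, Polynomial.eval 0 r ≠ 0 ∧
      f * algebraMap (Polynomial ℚ) KK r = algebraMap (Polynomial ℚ) KK p}
  zero_mem' := ⟨0, 1, by simp, by simp⟩
  one_mem' := ⟨1, 1, by simp, by simp⟩
  add_mem' := by
    rintro a b ⟨p₁, r₁, h₁, e₁⟩ ⟨p₂, r₂, h₂, e₂⟩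
    refine ⟨p₁ * r₂ + p₂ * r₁, r₁ * r₂, by simp [h₁, h₂], ?_⟩
    have key : (a + b) * algebraMap (Polynomial ℚ) KK (r₁ * r₂) =
        (a * algebraMap (Polynomial ℚ) KK r₁) * algebraMap (Polynomial ℚ) KK r₂ +
          (b * algebraMap (Polynomial ℚ) KK r₂) * algebraMap (Polynomial ℚ) KK r₁ := by
      rw [map_mul]; ring
    rw [key, e₁, e₂, map_add, map_mul, map_mul]
  mul_mem' := by
    rintro a b ⟨p₁, r₁, h₁, e₁⟩ ⟨p₂, r₂, h₂, e₂⟩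
    refine ⟨p₁ * p₂, r₁ * r₂, by simp [h₁, h₂], ?_⟩
    calc a * b * algebraMap (Polynomial ℚ) KK (r₁ * r₂)
        = (a * algebraMap (Polynomial ℚ) KK r₁) * (b * algebraMap (Polynomial ℚ) KK r₂) := by
          rw [map_mul]; ring
      _ = _ := by rw [e₁, e₂, map_mul]
  neg_mem' := by
    rintro a ⟨p, r, h, e⟩
    exact ⟨-p, r, h, by rw [map_neg, neg_mul, e]⟩

/-- the quantum integer `[s] = (q^s − q^{−s})/(q − q^{−1})`. -/
def bq (s : ℕ) : KK := (qq ^ s - qq⁻¹ ^ s) / (qq - qq⁻¹)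

/-- `u₀ = (1,0)` and `u₁ = (0,1)`, the standard basis of `𝕜 ⊕ 𝕜` (used both for `V₁`
when `a + b > 0` and for `V₂ = 𝕜w₀ ⊕ 𝕜w₁`). -/
def u0 : KK × KK := (1, 0)

def u1 : KK × KK := (0, 1)

/-- the action of `e` on `V₁` (`a + b > 0`): `e u₀ = 0`, `e u₁ = [a+b] u₀`. -/
def E1 (s : ℕ) : KK × KK →ₗ[KK] KK × KK :=
  LinearMap.inl KK KK KK ∘ₗ (bq s • LinearMap.snd KK KK KK)

/-- the action of `f` on `V₁` (`a + b > 0`): `f u₀ = u₁`, `f u₁ = 0`. -/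
def F1 : KK × KK →ₗ[KK] KK × KK := LinearMap.inr KK KK KK ∘ₗ LinearMap.fst KK KK KK

/-- the action of `k` on `V₁` (`a + b > 0`): multiplication by `q^{a+b}`. -/
def K1 (s : ℕ) : KK × KK →ₗ[KK] KK × KK := qq ^ s • LinearMap.id

/-- the action of `e'` on `V₂`: `e' w₀ = 0`, `e' w₁ = w₀`. -/
def E2 : KK × KK →ₗ[KK] KK × KK := LinearMap.inl KK KK KK ∘ₗ LinearMap.snd KK KK KK

/-- the action of `f` on `V₂`: `f w₀ = w₁`, `f w₁ = 0`. -/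
def F2 : KK × KK →ₗ[KK] KK × KK := LinearMap.inr KK KK KK ∘ₗ LinearMap.fst KK KK KK

/-- `V₁ ⊗ V₂` in the case `a + b > 0`. -/
abbrev VV : Type := (KK × KK) ⊗[KK] (KK × KK)

/-- `V₁ ⊗ V₂` in the case `a = b = 0` (where `V₁ = 𝕜 u₀` is one-dimensional). -/
abbrev V0 : Type := KK ⊗[KK] (KK × KK)

/-- `f̃` on `V₁ ⊗ V₂`: the action of `f` via `Δ(f) = f ⊗ 1 + k ⊗ f` (case `a + b > 0`). -/
def Ft (s : ℕ) : VV →ₗ[KK] VV :=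
  TensorProduct.map F1 LinearMap.id + TensorProduct.map (K1 s) F2

/-- `ẽ` on `V₁ ⊗ V₂`: the action of `e'` via
`Δ(e') = (q^{-1} - q)(k e) ⊗ 1 + k ⊗ e'` (case `a + b > 0`). -/
def Et (s : ℕ) : VV →ₗ[KK] VV :=
  (qq⁻¹ - qq) • TensorProduct.map (K1 s ∘ₗ E1 s) LinearMap.id +
    TensorProduct.map (K1 s) E2

/-- `f̃` on `V₁ ⊗ V₂` in the case `a = b = 0` (`k` acts by `1` and `e = f = 0` on `V₁`). -/
def Ft0 : V0 →ₗ[KK] V0 := TensorProduct.map LinearMap.id F2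

/-- `ẽ` on `V₁ ⊗ V₂` in the case `a = b = 0`. -/
def Et0 : V0 →ₗ[KK] V0 := TensorProduct.map LinearMap.id E2

/-- the vectors `u_i ⊗ w_j` (case `a + b > 0`). -/
def gV (i j : Fin 2) : VV := (if i = 0 then u0 else u1) ⊗ₜ[KK] (if j = 0 then u0 else u1)

/-- the lattice `L₁ ⊗_{A₀} L₂`, i.e. the `A₀`-span of the `u_i ⊗ w_j` (case `a + b > 0`). -/
def Lpos : Submodule A0 VV := Submodule.span A0 {x | ∃ i j : Fin 2, x = gV i j}

/-- `q(L₁ ⊗_{A₀} L₂)` (case `a + b > 0`). -/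
def qLpos : Submodule A0 VV := Submodule.span A0 {x | ∃ i j : Fin 2, x = qq • gV i j}

/-- the vectors `u₀ ⊗ w_j` (case `a = b = 0`). -/
def g0 (j : Fin 2) : V0 := (1 : KK) ⊗ₜ[KK] (if j = 0 then u0 else u1)

/-- the lattice `L₁ ⊗_{A₀} L₂` (case `a = b = 0`). -/
def L0 : Submodule A0 V0 := Submodule.span A0 {x | ∃ j : Fin 2, x = g0 j}

/-- `q(L₁ ⊗_{A₀} L₂)` (case `a = b = 0`). -/
def qL0 : Submodule A0 V0 := Submodule.span A0 {x | ∃ j : Fin 2, x = qq • g0 j}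


section Helpers

lemma mem_A0_poly (p : Polynomial ℚ) : (algebraMap (Polynomial ℚ) KK p) ∈ A0 :=
  ⟨p, 1, by simp, by simp⟩

lemma qq_pow_mem (n : ℕ) : qq ^ n ∈ A0 := by
  have := mem_A0_poly (Polynomial.X ^ n)
  simpa [qq, map_pow, RatFunc.algebraMap_X] using this

lemma A0_smul_mem {M : Type} [AddCommMonoid M] [Module KK M] (L : Submodule A0 M)
    {c : KK} (hc : c ∈ A0) {x : M} (hx : x ∈ L) : c • x ∈ L := by
  have h : c • x = (⟨c, hc⟩ : A0) • x := rfl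
  rw [h]; exact L.smul_mem _ hx

lemma qq_ne_zero : qq ≠ 0 := RatFunc.X_ne_zero

lemma qq_sq_ne_one : qq ^ 2 ≠ (1 : KK) := by
  intro h
  have h2 : algebraMap (Polynomial ℚ) KK (Polynomial.X ^ 2) =
      algebraMap (Polynomial ℚ) KK 1 := by
    simpa [map_pow, RatFunc.algebraMap_X, qq] using h
  have h3 := RatFunc.algebraMap_injective ℚ h2
  have := congrArg Polynomial.natDegree h3
  simp at this

lemma qq_sub_inv_ne_zero : qq - qq⁻¹ ≠ 0 := by
  intro h
  apply qq_sq_ne_one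
  have hq := qq_ne_zero
  field_simp at h
  linear_combination h

lemma key (s : ℕ) : (qq⁻¹ - qq) * (qq ^ s * bq s) = 1 - qq ^ (2 * s) := by
  have hq := qq_ne_zero
  have hd := qq_sub_inv_ne_zero
  have h1 : bq s * (qq - qq⁻¹) = qq ^ s - qq⁻¹ ^ s := div_mul_cancel₀ _ hd
  have h2 : qq ^ s * qq⁻¹ ^ s = 1 := by rw [← mul_pow, mul_inv_cancel₀ hq, one_pow]
  have h3 : (qq⁻¹ - qq) * (qq ^ s * bq s) = -(qq ^ s) * (bq s * (qq - qq⁻¹)) := by ring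
  rw [h3, h1, show 2 * s = s * 2 from mul_comm 2 s, pow_mul]
  linear_combination h2

end Helpers

section Compute
set_option synthInstance.maxHeartbeats 1000000
set_option maxHeartbeats 1000000

@[simp] lemma F1_u0 : F1 u0 = u1 := by simp [F1, u0, u1]
@[simp] lemma F1_u1 : F1 u1 = 0 := by simp [F1, u1]
@[simp] lemma F2_u0 : F2 u0 = u1 := by simp [F2, u0, u1]
@[simp] lemma F2_u1 : F2 u1 = 0 := by simp [F2, u1]
@[simp] lemma E2_u0 : E2 u0 = 0 := by simp [E2, u0]
@[simp] lemma E2_u1 : E2 u1 = u0 := by simp [E2, u0, u1]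
@[simp] lemma K1_apply (s : ℕ) (x : KK × KK) : K1 s x = qq ^ s • x := rfl
@[simp] lemma E1_u0 (s : ℕ) : E1 s u0 = 0 := by simp [E1, u0]
@[simp] lemma E1_u1 (s : ℕ) : E1 s u1 = bq s • u0 := by
  simp [E1, u1, u0, Prod.smul_mk]

lemma gV00 : gV 0 0 = u0 ⊗ₜ[KK] u0 := rfl
lemma gV01 : gV 0 1 = u0 ⊗ₜ[KK] u1 := rfl
lemma gV10 : gV 1 0 = u1 ⊗ₜ[KK] u0 := rfl
lemma gV11 : gV 1 1 = u1 ⊗ₜ[KK] u1 := rfl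

lemma Ft_apply (s : ℕ) (x y : KK × KK) :
    Ft s (x ⊗ₜ y) = F1 x ⊗ₜ y + (qq ^ s • x) ⊗ₜ F2 y := by
  simp [Ft, TensorProduct.map_tmul]

lemma Et_apply (s : ℕ) (x y : KK × KK) :
    Et s (x ⊗ₜ y) = ((qq⁻¹ - qq) • (qq ^ s • E1 s x)) ⊗ₜ y + (qq ^ s • x) ⊗ₜ E2 y := by
  simp [Et, TensorProduct.map_tmul, TensorProduct.smul_tmul']

lemma Ft_00 (s : ℕ) : Ft s (gV 0 0) = gV 1 0 + qq ^ s • gV 0 1 := by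
  rw [gV00, gV10, gV01, Ft_apply]
  simp [TensorProduct.smul_tmul']

lemma Ft_01 (s : ℕ) : Ft s (gV 0 1) = gV 1 1 := by
  rw [gV01, gV11, Ft_apply]; simp

lemma Ft_10 (s : ℕ) : Ft s (gV 1 0) = qq ^ s • gV 1 1 := by
  rw [gV10, gV11, Ft_apply]; simp [TensorProduct.smul_tmul']

lemma Ft_11 (s : ℕ) : Ft s (gV 1 1) = 0 := by
  rw [gV11, Ft_apply]; simp

lemma Et_00 (s : ℕ) : Et s (gV 0 0) = 0 := by
  rw [gV00, Et_apply]; simp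

lemma Et_01 (s : ℕ) : Et s (gV 0 1) = qq ^ s • gV 0 0 := by
  rw [gV01, gV00, Et_apply]; simp [TensorProduct.smul_tmul']

lemma Et_10 (s : ℕ) : Et s (gV 1 0) = gV 0 0 - qq ^ (2 * s) • gV 0 0 := by
  rw [gV10, gV00, Et_apply]
  simp only [E1_u1, E2_u0, TensorProduct.tmul_zero, add_zero, smul_smul,
    TensorProduct.smul_tmul']
  rw [show (qq⁻¹ - qq) * (qq ^ s * bq s) = 1 - qq ^ (2*s) from key s]
  rw [sub_smul, one_smul, TensorProduct.sub_tmul]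

lemma Et_11 (s : ℕ) :
    Et s (gV 1 1) = gV 0 1 - qq ^ (2 * s) • gV 0 1 + qq ^ s • gV 1 0 := by
  rw [gV11, gV01, gV10, Et_apply]
  simp only [E1_u1, E2_u1, smul_smul, TensorProduct.smul_tmul']
  rw [show (qq⁻¹ - qq) * (qq ^ s * bq s) = 1 - qq ^ (2*s) from key s]
  rw [sub_smul, one_smul, TensorProduct.sub_tmul]

end Compute

section Rest
set_option synthInstance.maxHeartbeats 1000000
set_option maxHeartbeats 1000000

@[simp] lemma Ft0_0 : Ft0 (g0 0) = g0 1 := by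
  simp [Ft0, g0, TensorProduct.map_tmul]

@[simp] lemma Ft0_1 : Ft0 (g0 1) = 0 := by
  simp [Ft0, g0, TensorProduct.map_tmul]

@[simp] lemma Et0_0 : Et0 (g0 0) = 0 := by
  simp [Et0, g0, TensorProduct.map_tmul]

@[simp] lemma Et0_1 : Et0 (g0 1) = g0 0 := by
  simp [Et0, g0, TensorProduct.map_tmul]

def bVV : Module.Basis (Fin 2 × Fin 2) KK VV :=
  Module.Basis.tensorProduct (Module.Basis.finTwoProd KK) (Module.Basis.finTwoProd KK)

lemma gV_eq (p : Fin 2 × Fin 2) : gV p.1 p.2 = bVV p := by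
  obtain ⟨i, j⟩ := p
  fin_cases i <;> fin_cases j <;>
    simp [gV, u0, u1, bVV, Module.Basis.tensorProduct_apply, Module.Basis.finTwoProd_zero,
      Module.Basis.finTwoProd_one, -Prod.mk_zero_zero, -Prod.mk_one_one]

def bV0 : Module.Basis (Fin 2) KK V0 :=
  (Module.Basis.finTwoProd KK).map (TensorProduct.lid KK (KK × KK)).symm

lemma g0_eq (j : Fin 2) : g0 j = bV0 j := by
  fin_cases j <;>
    simp [g0, u0, u1, bV0, Module.Basis.map_apply, Module.Basis.finTwoProd_zero,
      Module.Basis.finTwoProd_one, TensorProduct.lid_symm_apply]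

lemma A0_inj : Function.Injective fun r : A0 => r • (1 : KK) := by
  intro x y h
  have h' : (x : KK) * 1 = (y : KK) * 1 := h
  exact Subtype.ext (by simpa using h')

lemma li_gV : LinearIndependent A0 fun p : Fin 2 × Fin 2 => gV p.1 p.2 := by
  have e : (fun p : Fin 2 × Fin 2 => gV p.1 p.2) = bVV := funext gV_eq
  rw [e]
  exact bVV.linearIndependent.restrict_scalars A0_inj

lemma li_g0 : LinearIndependent A0 fun j : Fin 2 => g0 j := by
  have e : (fun j : Fin 2 => g0 j) = bV0 := funext g0_eq
  rw [e]
  exact bV0.linearIndependent.restrict_scalars A0_inj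

lemma span_gV : Submodule.span KK {x | ∃ i j : Fin 2, x = gV i j} = ⊤ := by
  have hset : {x | ∃ i j : Fin 2, x = gV i j} = Set.range bVV := by
    ext x
    constructor
    · rintro ⟨i, j, rfl⟩; exact ⟨(i, j), (gV_eq (i, j)).symm⟩
    · rintro ⟨⟨i, j⟩, rfl⟩; exact ⟨i, j, (gV_eq (i, j)).symm⟩
  rw [hset]; exact bVV.span_eq

lemma span_g0 : Submodule.span KK {x | ∃ j : Fin 2, x = g0 j} = ⊤ := by
  have hset : {x | ∃ j : Fin 2, x = g0 j} = Set.range bV0 := by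
    ext x
    constructor
    · rintro ⟨j, rfl⟩; exact ⟨j, (g0_eq j).symm⟩
    · rintro ⟨j, rfl⟩; exact ⟨j, (g0_eq j).symm⟩
  rw [hset]; exact bV0.span_eq

lemma map_mem_span {M : Type} [AddCommGroup M] [Module KK M] (T : M →ₗ[KK] M)
    (S : Set M) (hT : ∀ x ∈ S, T x ∈ Submodule.span A0 S) :
    ∀ x ∈ Submodule.span A0 S, T x ∈ Submodule.span A0 S := by
  intro x hx
  induction hx using Submodule.span_induction with
  | mem x hx => exact hT x hx
  | zero => simp
  | add x y _ _ hx hy => rw [map_add]; exact add_mem hx hy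
  | smul c x _ hx =>
      have h : (c • x : M) = (c : KK) • x := rfl
      rw [h, map_smul]
      exact A0_smul_mem _ c.2 hx

lemma gV_mem (i j : Fin 2) : gV i j ∈ Lpos := Submodule.subset_span ⟨i, j, rfl⟩

lemma g0_mem (j : Fin 2) : g0 j ∈ L0 := Submodule.subset_span ⟨j, rfl⟩

lemma qpow_gV_mem {s : ℕ} (hs : 0 < s) (i j : Fin 2) : qq ^ s • gV i j ∈ qLpos := by
  obtain ⟨t, rfl⟩ : ∃ t, s = t + 1 := ⟨s - 1, by omega⟩
  have h : qq ^ (t + 1) • gV i j = qq ^ t • (qq • gV i j) := by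
    rw [smul_smul, ← pow_succ]
  rw [h]
  exact A0_smul_mem _ (qq_pow_mem t) (Submodule.subset_span ⟨i, j, rfl⟩)

end Rest

set_option synthInstance.maxHeartbeats 1000000 in
set_option maxHeartbeats 1000000 in
theorem statement17 (a b : ℕ) :
    (0 < a + b →
      Submodule.span KK {x | ∃ i j : Fin 2, x = gV i j} = ⊤ ∧
      (LinearIndependent A0 fun p : Fin 2 × Fin 2 => gV p.1 p.2) ∧
      (∀ x ∈ Lpos, Ft (a + b) x ∈ Lpos ∧ Et (a + b) x ∈ Lpos) ∧
      Ft (a + b) (gV 0 0) - gV 1 0 ∈ qLpos ∧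
      Ft (a + b) (gV 0 1) - gV 1 1 ∈ qLpos ∧
      Ft (a + b) (gV 1 0) ∈ qLpos ∧ Ft (a + b) (gV 1 1) ∈ qLpos ∧
      Et (a + b) (gV 1 0) - gV 0 0 ∈ qLpos ∧
      Et (a + b) (gV 1 1) - gV 0 1 ∈ qLpos ∧
      Et (a + b) (gV 0 0) ∈ qLpos ∧ Et (a + b) (gV 0 1) ∈ qLpos) ∧
    (a + b = 0 →
      Submodule.span KK {x | ∃ j : Fin 2, x = g0 j} = ⊤ ∧
      (LinearIndependent A0 fun j : Fin 2 => g0 j) ∧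
      (∀ x ∈ L0, Ft0 x ∈ L0 ∧ Et0 x ∈ L0) ∧
      Ft0 (g0 0) - g0 1 ∈ qL0 ∧ Ft0 (g0 1) ∈ qL0 ∧
      Et0 (g0 1) - g0 0 ∈ qL0 ∧ Et0 (g0 0) ∈ qL0) := by
  set s := a + b with hsdef
  constructor
  · intro hs
    have hFtgen : ∀ x ∈ {x : VV | ∃ i j : Fin 2, x = gV i j},
        Ft s x ∈ Submodule.span A0 {x : VV | ∃ i j : Fin 2, x = gV i j} := by
      rintro x ⟨i, j, rfl⟩
      fin_cases i <;> fin_cases j <;> simp only [Fin.zero_eta, Fin.mk_one]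
      · rw [Ft_00]
        exact add_mem (gV_mem 1 0) (A0_smul_mem _ (qq_pow_mem s) (gV_mem 0 1))
      · rw [Ft_01]; exact gV_mem 1 1
      · rw [Ft_10]; exact A0_smul_mem _ (qq_pow_mem s) (gV_mem 1 1)
      · rw [Ft_11]; exact zero_mem _
    have hEtgen : ∀ x ∈ {x : VV | ∃ i j : Fin 2, x = gV i j},
        Et s x ∈ Submodule.span A0 {x : VV | ∃ i j : Fin 2, x = gV i j} := by
      rintro x ⟨i, j, rfl⟩
      fin_cases i <;> fin_cases j <;> simp only [Fin.zero_eta, Fin.mk_one]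
      · rw [Et_00]; exact zero_mem _
      · rw [Et_01]; exact A0_smul_mem _ (qq_pow_mem s) (gV_mem 0 0)
      · rw [Et_10]
        exact sub_mem (gV_mem 0 0) (A0_smul_mem _ (qq_pow_mem _) (gV_mem 0 0))
      · rw [Et_11]
        exact add_mem
          (sub_mem (gV_mem 0 1) (A0_smul_mem _ (qq_pow_mem _) (gV_mem 0 1)))
          (A0_smul_mem _ (qq_pow_mem s) (gV_mem 1 0))
    refine ⟨span_gV, li_gV, ?_, ?_, ?_, ?_, ?_, ?_, ?_, ?_, ?_⟩
    · intro x hx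
      exact ⟨map_mem_span (Ft s) _ hFtgen x hx, map_mem_span (Et s) _ hEtgen x hx⟩
    · rw [Ft_00, add_sub_cancel_left]; exact qpow_gV_mem hs 0 1
    · rw [Ft_01, sub_self]; exact zero_mem _
    · rw [Ft_10]; exact qpow_gV_mem hs 1 1
    · rw [Ft_11]; exact zero_mem _
    · rw [Et_10, sub_sub_cancel_left]
      exact neg_mem (qpow_gV_mem (by omega) 0 0)
    · rw [Et_11]
      have e : gV 0 1 - qq ^ (2 * s) • gV 0 1 + qq ^ s • gV 1 0 - gV 0 1 =
          qq ^ s • gV 1 0 - qq ^ (2 * s) • gV 0 1 := by abel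
      rw [e]
      exact sub_mem (qpow_gV_mem hs 1 0) (qpow_gV_mem (by omega) 0 1)
    · rw [Et_00]; exact zero_mem _
    · rw [Et_01]; exact qpow_gV_mem hs 0 0
  · intro _
    have hFt0 : ∀ x ∈ {x : V0 | ∃ j : Fin 2, x = g0 j},
        Ft0 x ∈ Submodule.span A0 {x : V0 | ∃ j : Fin 2, x = g0 j} := by
      rintro x ⟨j, rfl⟩
      fin_cases j <;> simp only [Fin.zero_eta, Fin.mk_one]
      · rw [Ft0_0]; exact g0_mem 1
      · rw [Ft0_1]; exact zero_mem _
    have hEt0 : ∀ x ∈ {x : V0 | ∃ j : Fin 2, x = g0 j},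
        Et0 x ∈ Submodule.span A0 {x : V0 | ∃ j : Fin 2, x = g0 j} := by
      rintro x ⟨j, rfl⟩
      fin_cases j <;> simp only [Fin.zero_eta, Fin.mk_one]
      · rw [Et0_0]; exact zero_mem _
      · rw [Et0_1]; exact g0_mem 0
    refine ⟨span_g0, li_g0, ?_, ?_, ?_, ?_, ?_⟩
    · intro x hx
      exact ⟨map_mem_span Ft0 _ hFt0 x hx, map_mem_span Et0 _ hEt0 x hx⟩
    · rw [Ft0_0, sub_self]; exact zero_mem _
    · rw [Ft0_1]; exact zero_mem _
    · rw [Et0_1, sub_self]; exact zero_mem _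
    · rw [Et0_0]; exact zero_mem _
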